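/- arXiv:2311.07610 — 3 statements merged into one kernel-verified Lean document; each statement's English description precedes it below -/
import Mathlib

section
/- For every positive integer n, n·∑_{k=1}^{⌊n/2⌋} ((-1)^{k-1}/k)·C(n-k-1, k-1)·L_{n-2k} equals L_n - (-1)^n·4 if n ≡ 0 (mod 5), and equals L_n + (-1)^n otherwise. -/
open Finset Real

/-- Fibonacci numbers extended to integer indices. -/
def fibZ (n : ℤ) : ℤ :=
  if 0 ≤ n then (Nat.fib n.toNat : ℤ)
  else (-1) ^ ((-n).toNat + 1) * (Nat.fib (-n).toNat : ℤ)

/-- Lucas numbers on natural indices. -/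
def lucasNat : ℕ → ℤ
  | 0 => 2
  | 1 => 1
  | n + 2 => lucasNat (n + 1) + lucasNat n

/-- Lucas numbers extended to integer indices. -/
def lucasZ (n : ℤ) : ℤ :=
  if 0 ≤ n then lucasNat n.toNat
  else (-1) ^ (-n).toNat * lucasNat (-n).toNat

noncomputable def gold : ℝ := (1 + Real.sqrt 5) / 2
noncomputable def gold' : ℝ := (1 - Real.sqrt 5) / 2


noncomputable def cS (n k : ℕ) : ℝ :=
  (-1) ^ k * n * (Nat.choose (n - k) k : ℝ) / ((n - k : ℕ) : ℝ)

noncomputable def SS (n : ℕ) (x : ℝ) : ℝ :=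
  ∑ k ∈ Finset.range (n + 1), cS n k * x ^ (n - 2 * k)

lemma cS_eq_zero {n k : ℕ} (hk : n < 2 * k) (hk1 : 1 ≤ k) : cS n k = 0 := by
  have h : Nat.choose (n - k) k = 0 := Nat.choose_eq_zero_of_lt (by omega)
  simp [cS, h]

lemma cS_zero {n : ℕ} (hn : 1 ≤ n) : cS n 0 = 1 := by
  have : (n : ℝ) ≠ 0 := by positivity
  simp [cS, div_self this]

lemma cS_rec (n k : ℕ) (hn : 1 ≤ n) :
    cS (n + 2) (k + 1) = cS (n + 1) (k + 1) - cS n k := by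
  by_cases h : 2 * k ≤ n
  · -- nontrivial case
    have hk1 : k ≤ n - k := by omega
    have hnk : 1 ≤ n - k := by omega
    have h1 : n + 1 - k = (n - k) + 1 := by omega
    have h2 : n + 2 - (k + 1) = (n - k) + 1 := by omega
    have h3 : n + 1 - (k + 1) = n - k := by omega
    have pascal : Nat.choose (n - k + 1) (k + 1) =
        Nat.choose (n - k) k + Nat.choose (n - k) (k + 1) :=
      Nat.choose_succ_succ' (n - k) k ▸ rfl
    have absorb : Nat.choose (n - k) (k + 1) * (k + 1) =
        Nat.choose (n - k) k * ((n - k) - k) := Nat.choose_succ_right_eq _ _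
    have absorbR : (Nat.choose (n - k) (k + 1) : ℝ) * (k + 1) =
        (Nat.choose (n - k) k : ℝ) * ((n : ℝ) - 2 * k) := by
      have h4 : n - k - k = n - 2 * k := by omega
      rw [h4] at absorb
      have h5 := congrArg (Nat.cast (R := ℝ)) absorb
      push_cast [Nat.cast_sub (show 2 * k ≤ n from h)] at h5
      linear_combination h5
    unfold cS
    rw [h2, h3, pascal]
    have hne1 : ((n - k : ℕ) : ℝ) ≠ 0 := by positivity
    have hne2 : ((n - k + 1 : ℕ) : ℝ) ≠ 0 := by positivity
    have hcast : ((n - k : ℕ) : ℝ) = (n : ℝ) - k := by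
      push_cast [Nat.cast_sub (by omega : k ≤ n)]; ring
    field_simp
    push_cast
    rw [hcast]
    simp only [pow_succ]
    linear_combination ((-1 : ℝ) ^ k) * absorbR
  · -- all coefficients vanish
    rw [cS_eq_zero (by omega) (by omega), cS_eq_zero (by omega) (by omega),
      cS_eq_zero (by omega) (by omega)]
    ring

lemma SS_rec (n : ℕ) (hn : 1 ≤ n) (x : ℝ) :
    SS (n + 2) x = x * SS (n + 1) x - SS n x := by
  unfold SS
  rw [Finset.sum_range_succ' (fun k => cS (n+2) k * x ^ (n + 2 - 2 * k)) (n + 2)]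
  rw [Finset.mul_sum]
  rw [Finset.sum_range_succ' (fun k => x * (cS (n+1) k * x ^ (n + 1 - 2 * k))) (n + 1)]
  have e0 : cS (n+2) 0 * x ^ (n + 2 - 2 * 0) = x * (cS (n+1) 0 * x ^ (n + 1 - 2 * 0)) := by
    rw [cS_zero (by omega), cS_zero (by omega)]
    have : n + 2 - 2 * 0 = (n + 1 - 2 * 0) + 1 := by omega
    rw [this, pow_succ]; ring
  rw [e0]
  -- extend third sum to range (n+2)
  have e3 : (∑ k ∈ Finset.range (n + 2), cS n k * x ^ (n - 2 * k)) =
      ∑ k ∈ Finset.range (n + 1), cS n k * x ^ (n - 2 * k) := by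
    rw [Finset.sum_range_succ]
    rw [cS_eq_zero (show n < 2 * (n + 1) by omega) (by omega)]
    ring
  rw [← e3]
  -- extend middle sum to range (n+2)
  have e2 : (∑ k ∈ Finset.range (n + 2), x * (cS (n+1) (k+1) * x ^ (n + 1 - 2 * (k+1)))) =
      ∑ k ∈ Finset.range (n + 1), x * (cS (n+1) (k+1) * x ^ (n + 1 - 2 * (k+1))) := by
    rw [Finset.sum_range_succ]
    rw [cS_eq_zero (show n + 1 < 2 * (n + 1 + 1) by omega) (by omega)]
    ring
  rw [← e2]
  have key : ∀ k ∈ Finset.range (n+2),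
      cS (n+2) (k+1) * x ^ (n + 2 - 2 * (k+1)) =
      x * (cS (n+1) (k+1) * x ^ (n + 1 - 2 * (k+1))) - cS n k * x ^ (n - 2 * k) := by
    intro k _
    rw [cS_rec n k hn]
    have hp : n + 2 - 2 * (k+1) = n - 2 * k := by omega
    rw [hp]
    by_cases hcase : 2 * k < n
    · have hq : n - 2 * k = (n + 1 - 2 * (k+1)) + 1 := by omega
      rw [hq, pow_succ]; ring
    · rw [cS_eq_zero (show n + 1 < 2 * (k+1) by omega) (by omega)]
      ring
  rw [Finset.sum_congr rfl key, Finset.sum_sub_distrib]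
  ring

lemma SS_one (x : ℝ) : SS 1 x = x := by
  unfold SS
  rw [Finset.sum_range_succ, Finset.sum_range_one]
  rw [cS_zero (by omega), cS_eq_zero (by omega) (by omega)]
  norm_num

lemma SS_two (x : ℝ) : SS 2 x = x ^ 2 - 2 := by
  unfold SS
  rw [Finset.sum_range_succ, Finset.sum_range_succ, Finset.sum_range_one]
  rw [cS_zero (by omega), cS_eq_zero (show 2 < 2 * 2 by omega) (by omega)]
  have : cS 2 1 = -2 := by
    unfold cS
    norm_num
  rw [this]
  ring

lemma SS_eq (n : ℕ) (hn : 1 ≤ n) (x : ℝ) :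
    SS n x = x ^ n - (n : ℝ) * ∑ k ∈ Finset.Icc 1 (n / 2),
      (-1 : ℝ) ^ (k - 1) / k * (Nat.choose (n - k - 1) (k - 1) : ℝ) * x ^ (n - 2 * k) := by
  unfold SS
  rw [Finset.sum_range_succ' (fun k => cS n k * x ^ (n - 2 * k)) n]
  have h0 : cS n 0 * x ^ (n - 2 * 0) = x ^ n := by
    rw [cS_zero hn]; norm_num
  have hsub : Finset.range (n / 2) ⊆ Finset.range n :=
    Finset.range_subset_range.2 (by omega)
  have hzero : ∀ k ∈ Finset.range n, k ∉ Finset.range (n / 2) →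
      cS n (k + 1) * x ^ (n - 2 * (k + 1)) = 0 := by
    intro k _ hk
    rw [Finset.mem_range, not_lt] at hk
    rw [cS_eq_zero (by omega) (by omega)]
    ring
  rw [← Finset.sum_subset hsub hzero]
  rw [Finset.mul_sum, ← Finset.Ico_add_one_right_eq_Icc, Finset.sum_Ico_eq_sum_range]
  have hr : n / 2 + 1 - 1 = n / 2 := by omega
  rw [hr]
  have key : ∀ k ∈ Finset.range (n / 2),
      cS n (k + 1) * x ^ (n - 2 * (k + 1)) =
      -((n : ℝ) * ((-1 : ℝ) ^ (1 + k - 1) / (1 + k) *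
        (Nat.choose (n - (1 + k) - 1) (1 + k - 1) : ℝ) * x ^ (n - 2 * (1 + k)))) := by
    intro k hk
    rw [Finset.mem_range] at hk
    have hj : k + 1 ≤ n / 2 := by omega
    have hjn : k + 1 ≤ n - (k + 1) := by omega
    have h1 : 1 + k - 1 = k := by omega
    have h2 : n - (1 + k) - 1 = n - (k + 1) - 1 := by omega
    have h3 : n - 2 * (1 + k) = n - 2 * (k + 1) := by omega
    rw [h1, h2, h3]
    have habs : (n - (k + 1)) * Nat.choose (n - (k + 1) - 1) k =
        Nat.choose (n - (k + 1)) (k + 1) * (k + 1) := by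
      have := Nat.add_one_mul_choose_eq (n - (k + 1) - 1) k
      have hs : n - (k + 1) - 1 + 1 = n - (k + 1) := by omega
      rw [← hs]
      exact this
    have habsR : ((n - (k + 1) : ℕ) : ℝ) * (Nat.choose (n - (k + 1) - 1) k : ℝ) =
        (Nat.choose (n - (k + 1)) (k + 1) : ℝ) * ((k : ℝ) + 1) := by
      exact_mod_cast congrArg (Nat.cast (R := ℝ)) habs
    unfold cS
    have hne1 : ((n - (k + 1) : ℕ) : ℝ) ≠ 0 := by
      have : 1 ≤ n - (k + 1) := by omega
      positivity
    have hne2 : ((1 : ℝ) + k) ≠ 0 := by positivity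
    field_simp
    rw [pow_succ]
    push_cast
    linear_combination ((-1 : ℝ) ^ k * x ^ (n - 2 * (k + 1))) * habsR
  rw [Finset.sum_congr rfl key, h0, Finset.sum_neg_distrib]
  push_cast
  ring

lemma sqrt5_sq : Real.sqrt 5 ^ 2 = 5 := Real.sq_sqrt (by norm_num)

lemma goldSq : gold ^ 2 = gold + 1 := by
  unfold gold; linear_combination (1/4 : ℝ) * sqrt5_sq

lemma goldSq' : gold' ^ 2 = gold' + 1 := by
  unfold gold'; linear_combination (1/4 : ℝ) * sqrt5_sq

lemma lucas_gold : ∀ m : ℕ, (lucasNat m : ℝ) = gold ^ m + gold' ^ m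
  | 0 => by norm_num [lucasNat]
  | 1 => by norm_num [lucasNat, gold, gold']
  | (m + 2) => by
    have h1 := lucas_gold (m + 1)
    have h0 := lucas_gold m
    show ((lucasNat (m + 1) + lucasNat m : ℤ) : ℝ) = _
    push_cast
    rw [h1, h0]
    have e1 : gold ^ (m + 2) = gold ^ m * gold ^ 2 := by ring
    have e2 : gold' ^ (m + 2) = gold' ^ m * gold' ^ 2 := by ring
    rw [e1, e2, goldSq, goldSq']
    ring

noncomputable def tabc : ℕ → ℝ
  | 0 => 4 | 1 => 1 | 2 => -1 | 3 => 1 | 4 => -1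
  | 5 => -4 | 6 => -1 | 7 => 1 | 8 => -1 | _ => 1

noncomputable def tabd : ℕ → ℝ
  | 0 => 2 | 1 => 3 | 2 => 2 | 3 => -2 | 4 => -3
  | 5 => -2 | 6 => -3 | 7 => -2 | 8 => 2 | _ => 3

lemma gold_add : gold + gold' = 1 := by unfold gold gold'; ring

lemma main_ind : ∀ n : ℕ, 1 ≤ n →
    SS n gold + SS n gold' = tabc (n % 10) ∧
    gold * SS n gold + gold' * SS n gold' = tabd (n % 10) := by
  intro n
  induction n using Nat.strong_induction_on with
  | _ n ih =>
    match n with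
    | 0 => intro h; exact absurd h (by omega)
    | 1 =>
      intro _
      rw [SS_one, SS_one, show (1 : ℕ) % 10 = 1 from rfl,
        show tabc 1 = 1 from rfl, show tabd 1 = 3 from rfl]
      constructor
      · exact gold_add
      · linear_combination goldSq + goldSq' + gold_add
    | 2 =>
      intro _
      rw [SS_two, SS_two, show (2 : ℕ) % 10 = 2 from rfl,
        show tabc 2 = -1 from rfl, show tabd 2 = 2 from rfl]
      constructor
      · linear_combination goldSq + goldSq' + gold_add
      · linear_combination (gold + 1) * goldSq + (gold' + 1) * goldSq'
    | (m + 3) =>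
      intro _
      obtain ⟨hp1, hq1⟩ := ih (m + 1) (by omega) (by omega)
      obtain ⟨hp2, hq2⟩ := ih (m + 2) (by omega) (by omega)
      have r1 := SS_rec (m + 1) (by omega) gold
      have r2 := SS_rec (m + 1) (by omega) gold'
      have hmod2 : (m + 2) % 10 = ((m + 1) % 10 + 1) % 10 := by omega
      have hmod3 : (m + 3) % 10 = ((m + 1) % 10 + 2) % 10 := by omega
      rw [hmod2] at hp2 hq2
      rw [hmod3]
      have hr : (m + 1) % 10 < 10 := Nat.mod_lt _ (by norm_num)
      have e13 : m + 1 + 2 = m + 3 := rfl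
      rw [e13] at r1 r2
      rw [r1, r2]
      set A := SS (m + 2) gold with hA
      set B := SS (m + 2) gold' with hB
      set a := SS (m + 1) gold with ha
      set b := SS (m + 1) gold' with hb
      constructor
      · have expand : gold * A - a + (gold' * B - b) =
            (gold * A + gold' * B) - (a + b) := by ring
        rw [expand, hq2, hp1]
        set r := (m + 1) % 10 with hrr
        interval_cases r <;> norm_num [tabc, tabd]
      · have expand : gold * (gold * A - a) + gold' * (gold' * B - b) =
            (gold * A + gold' * B) + (A + B) - (gold * a + gold' * b) := by
          linear_combination A * goldSq + B * goldSq'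
        rw [expand, hq2, hp2, hq1]
        set r := (m + 1) % 10 with hrr
        interval_cases r <;> norm_num [tabc, tabd]

theorem stmt5 (n : ℕ) (hn : 0 < n) :
    (n : ℝ) * ∑ k ∈ Finset.Icc 1 (n / 2),
        (-1 : ℝ) ^ (k - 1) / k * (Nat.choose (n - k - 1) (k - 1) : ℝ) *
          (lucasZ ((n : ℤ) - 2 * k) : ℝ) =
      if n % 5 = 0 then (lucasNat n : ℝ) - (-1 : ℝ) ^ n * 4
      else (lucasNat n : ℝ) + (-1 : ℝ) ^ n := by
  have hterm : ∀ k ∈ Finset.Icc 1 (n / 2),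
      (-1 : ℝ) ^ (k - 1) / k * (Nat.choose (n - k - 1) (k - 1) : ℝ) *
          (lucasZ ((n : ℤ) - 2 * k) : ℝ)
      = (-1 : ℝ) ^ (k - 1) / k * (Nat.choose (n - k - 1) (k - 1) : ℝ) * gold ^ (n - 2 * k)
      + (-1 : ℝ) ^ (k - 1) / k * (Nat.choose (n - k - 1) (k - 1) : ℝ) * gold' ^ (n - 2 * k) := by
    intro k hk
    rw [Finset.mem_Icc] at hk
    have h2k : 2 * k ≤ n := by omega
    have hlz : lucasZ ((n : ℤ) - 2 * k) = lucasNat (n - 2 * k) := by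
      unfold lucasZ
      rw [if_pos (by omega : (0 : ℤ) ≤ (n : ℤ) - 2 * k)]
      congr 1
      omega
    rw [hlz, show ((lucasNat (n - 2 * k) : ℤ) : ℝ) = gold ^ (n - 2 * k) + gold' ^ (n - 2 * k)
      from lucas_gold _]
    ring
  rw [Finset.sum_congr rfl hterm, Finset.sum_add_distrib]
  have g1 : (n : ℝ) * ∑ k ∈ Finset.Icc 1 (n / 2),
      (-1 : ℝ) ^ (k - 1) / k * (Nat.choose (n - k - 1) (k - 1) : ℝ) * gold ^ (n - 2 * k)
      = gold ^ n - SS n gold := by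
    linear_combination SS_eq n hn gold
  have g2 : (n : ℝ) * ∑ k ∈ Finset.Icc 1 (n / 2),
      (-1 : ℝ) ^ (k - 1) / k * (Nat.choose (n - k - 1) (k - 1) : ℝ) * gold' ^ (n - 2 * k)
      = gold' ^ n - SS n gold' := by
    linear_combination SS_eq n hn gold'
  obtain ⟨hp, -⟩ := main_ind n hn
  have step1 : (n : ℝ) * (∑ k ∈ Finset.Icc 1 (n / 2),
      (-1 : ℝ) ^ (k - 1) / k * (Nat.choose (n - k - 1) (k - 1) : ℝ) * gold ^ (n - 2 * k)
      + ∑ k ∈ Finset.Icc 1 (n / 2),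
      (-1 : ℝ) ^ (k - 1) / k * (Nat.choose (n - k - 1) (k - 1) : ℝ) * gold' ^ (n - 2 * k))
      = (lucasNat n : ℝ) - tabc (n % 10) := by
    linear_combination g1 + g2 - hp - lucas_gold n
  rw [step1]
  by_cases h5 : n % 5 = 0
  · rw [if_pos h5]
    have h10 : n % 10 = 0 ∨ n % 10 = 5 := by omega
    rcases h10 with h | h
    · rw [h, show tabc 0 = 4 from rfl,
        (Nat.even_iff.mpr (by omega : n % 2 = 0)).neg_one_pow]
      ring
    · rw [h, show tabc 5 = -4 from rfl,
        (Nat.odd_iff.mpr (by omega : n % 2 = 1)).neg_one_pow]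
      ring
  · rw [if_neg h5]
    have h10 : n % 10 = 1 ∨ n % 10 = 2 ∨ n % 10 = 3 ∨ n % 10 = 4 ∨
        n % 10 = 6 ∨ n % 10 = 7 ∨ n % 10 = 8 ∨ n % 10 = 9 := by omega
    rcases h10 with h | h | h | h | h | h | h | h
    · rw [h, show tabc 1 = 1 from rfl,
        (Nat.odd_iff.mpr (by omega : n % 2 = 1)).neg_one_pow]; ring
    · rw [h, show tabc 2 = -1 from rfl,
        (Nat.even_iff.mpr (by omega : n % 2 = 0)).neg_one_pow]; ring
    · rw [h, show tabc 3 = 1 from rfl,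
        (Nat.odd_iff.mpr (by omega : n % 2 = 1)).neg_one_pow]; ring
    · rw [h, show tabc 4 = -1 from rfl,
        (Nat.even_iff.mpr (by omega : n % 2 = 0)).neg_one_pow]; ring
    · rw [h, show tabc 6 = -1 from rfl,
        (Nat.even_iff.mpr (by omega : n % 2 = 0)).neg_one_pow]; ring
    · rw [h, show tabc 7 = 1 from rfl,
        (Nat.odd_iff.mpr (by omega : n % 2 = 1)).neg_one_pow]; ring
    · rw [h, show tabc 8 = -1 from rfl,
        (Nat.even_iff.mpr (by omega : n % 2 = 0)).neg_one_pow]; ring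
    · rw [h, show tabc 9 = 1 from rfl,
        (Nat.odd_iff.mpr (by omega : n % 2 = 1)).neg_one_pow]; ring
end

section
/- For every positive integer n and integer t, ∑_{k=0}^{⌊n/2⌋} (-1)^k·C(n-k, k)·F_{n-2k+t} equals (-1)^{⌊(n+1)/5⌋}·F_t if n ≡ 0 or 3 (mod 5); equals (-1)^{⌊n/5⌋}·F_{t+1} if n ≡ 1 or 2 (mod 5); and equals 0 if n ≡ 4 (mod 5). -/
open Finset Real

lemma fibZ_natCast (k : ℕ) : fibZ (k : ℤ) = Nat.fib k := by
  simp [fibZ]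

lemma fibZ_negSucc (k : ℕ) : fibZ (-((k:ℤ)+1)) = (-1)^(k+2) * (Nat.fib (k+1) : ℤ) := by
  have h : ¬ (0 ≤ -((k:ℤ)+1)) := by omega
  rw [fibZ, if_neg h]
  have h2 : (-(-((k:ℤ)+1))).toNat = k + 1 := by omega
  rw [h2]

lemma fibZ_add_two (m : ℤ) : fibZ (m + 2) = fibZ (m + 1) + fibZ m := by
  rcases le_or_gt 0 m with h | h
  · obtain ⟨k, rfl⟩ := Int.eq_ofNat_of_zero_le h
    have e2 : (k:ℤ) + 2 = ((k+2 : ℕ) : ℤ) := by push_cast; ring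
    have e1 : (k:ℤ) + 1 = ((k+1 : ℕ) : ℤ) := by push_cast; ring
    rw [e2, e1, fibZ_natCast, fibZ_natCast, fibZ_natCast, Nat.fib_add_two]
    push_cast; ring
  · obtain ⟨k, rfl⟩ : ∃ k : ℕ, m = -(k : ℤ) - 1 := ⟨(-m-1).toNat, by omega⟩
    match k with
    | 0 => decide
    | 1 => decide
    | (j+2) =>
      have e2 : (-((j+2:ℕ):ℤ) - 1 + 2) = -((j:ℤ)+1) := by push_cast; ring
      have e1 : (-((j+2:ℕ):ℤ) - 1 + 1) = -(((j+1:ℕ):ℤ)+1) := by push_cast; ring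
      have e0 : (-((j+2:ℕ):ℤ) - 1) = -(((j+2:ℕ):ℤ)+1) := by push_cast; ring
      rw [e2, e1, e0, fibZ_negSucc, fibZ_negSucc, fibZ_negSucc]
      have hf : Nat.fib (j+2+1) = Nat.fib (j+1+1) + Nat.fib (j+1) := by
        rw [show j+2+1 = (j+1)+2 by ring, Nat.fib_add_two]
        omega
      rw [hf]
      push_cast
      ring

def S (n : ℕ) (t : ℤ) : ℤ :=
  ∑ k ∈ Finset.range (n / 2 + 1),
    (-1 : ℤ) ^ k * (Nat.choose (n - k) k : ℤ) * fibZ ((n : ℤ) - 2 * k + t)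

def R (n : ℕ) (t : ℤ) : ℤ :=
  if n % 5 = 0 ∨ n % 5 = 3 then (-1) ^ ((n + 1) / 5) * fibZ t
  else if n % 5 = 1 ∨ n % 5 = 2 then (-1) ^ (n / 5) * fibZ (t + 1)
  else 0

lemma R_rec (n : ℕ) (t : ℤ) : R (n+2) t = R (n+1) (t+1) - R n t := by
  have hft := fibZ_add_two t
  have ht : t + 1 + 1 = t + 2 := by ring
  obtain ⟨q, r, hr, rfl⟩ : ∃ q r, r < 5 ∧ n = 5*q+r :=
    ⟨n/5, n%5, Nat.mod_lt _ (by norm_num), (Nat.div_add_mod n 5).symm⟩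
  interval_cases r <;> simp only [R] <;>
    [ (rw [if_neg (by omega), if_pos (by omega), if_neg (by omega), if_pos (by omega),
        if_pos (by omega), show (5*q+0+2)/5 = q by omega, show (5*q+0+1)/5 = q by omega,
        ht, hft]; ring);
      (rw [if_pos (by omega), if_neg (by omega), if_pos (by omega), if_neg (by omega),
        if_pos (by omega),
        show (5*q+1+2+1)/5 = q by omega, show (5*q+1+1)/5 = q by omega,
        show (5*q+1)/5 = q by omega, ht, hft]; ring);
      (rw [if_neg (by omega), if_neg (by omega), if_pos (by omega), if_neg (by omega),
        if_pos (by omega),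
        show (5*q+2+1+1)/5 = q by omega, show (5*q+2)/5 = q by omega]; ring);
      (rw [if_pos (by omega), if_neg (by omega), if_neg (by omega), if_pos (by omega),
        show (5*q+3+2+1)/5 = q+1 by omega, show (5*q+3+1)/5 = q by omega]; ring);
      (rw [if_neg (by omega), if_pos (by omega), if_pos (by omega), if_neg (by omega),
        if_neg (by omega),
        show (5*q+4+2)/5 = q+1 by omega]; ring) ]

lemma S_rec (n : ℕ) (t : ℤ) : S (n+2) t = S (n+1) (t+1) - S n t := by
  rw [eq_sub_iff_add_eq]
  unfold S
  have h1 : (n+2)/2 + 1 = (n/2+1) + 1 := by omega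
  rw [h1, Finset.sum_range_succ', Finset.sum_range_succ' _ ((n+1)/2), add_right_comm,
    ← Finset.sum_add_distrib]
  have hmid : ∀ i ∈ Finset.range (n/2+1),
      (-1:ℤ)^(i+1) * (Nat.choose (n+2-(i+1)) (i+1) : ℤ) * fibZ ((↑(n+2):ℤ) - 2*↑(i+1) + t)
        + (-1:ℤ)^i * (Nat.choose (n-i) i : ℤ) * fibZ ((n:ℤ) - 2*↑i + t)
      = (-1:ℤ)^(i+1) * (Nat.choose (n-i) (i+1) : ℤ) * fibZ ((n:ℤ) - 2*↑i + t) := by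
    intro i hi
    simp only [Finset.mem_range] at hi
    have hin : i ≤ n := by omega
    have e1 : n + 2 - (i+1) = (n-i) + 1 := by omega
    have e2 : ((n+2:ℕ):ℤ) - 2*((i+1:ℕ):ℤ) + t = (n:ℤ) - 2*(i:ℤ) + t := by push_cast; ring
    rw [e1, e2, Nat.choose_succ_succ]
    push_cast
    ring
  rw [Finset.sum_congr rfl hmid]
  have hrange : ∑ i ∈ Finset.range (n/2+1),
      (-1:ℤ)^(i+1) * (Nat.choose (n-i) (i+1) : ℤ) * fibZ ((n:ℤ) - 2*↑i + t)
      = ∑ i ∈ Finset.range ((n+1)/2),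
      (-1:ℤ)^(i+1) * (Nat.choose (n-i) (i+1) : ℤ) * fibZ ((n:ℤ) - 2*↑i + t) := by
    rcases Nat.even_or_odd n with he | ho
    · rw [Nat.even_iff] at he
      rw [show n/2+1 = (n+1)/2 + 1 by omega, Finset.sum_range_succ,
        Nat.choose_eq_zero_of_lt (by omega : n - (n+1)/2 < (n+1)/2 + 1)]
      push_cast
      ring
    · rw [Nat.odd_iff] at ho
      rw [show n/2+1 = (n+1)/2 by omega]
  rw [hrange]
  congr 1
  · apply Finset.sum_congr rfl
    intro i hi
    have e1 : n + 1 - (i+1) = n - i := by omega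
    have e2 : ((n+1:ℕ):ℤ) - 2*((i+1:ℕ):ℤ) + (t+1) = (n:ℤ) - 2*(i:ℤ) + t := by push_cast; ring
    rw [e1, e2]
  · have e2 : ((n+2:ℕ):ℤ) - 2*(0:ℕ) + t = ((n+1:ℕ):ℤ) - 2*(0:ℕ) + (t+1) := by push_cast; ring
    norm_num
    rw [show ((n:ℤ)+2+t) = ((n:ℤ)+1+(t+1)) by ring]

lemma key : ∀ n : ℕ, ∀ t : ℤ, S n t = R n t := by
  intro n
  induction n using Nat.strong_induction_on with
  | _ n ih =>
    match n with
    | 0 =>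
      intro t
      simp [S, R, Finset.sum_range_one]
    | 1 =>
      intro t
      have : S 1 t = fibZ (1 - 2*0 + t) := by
        simp [S, Finset.sum_range_one]
      rw [this, R]
      norm_num
      rw [show (1:ℤ) + t = t + 1 by ring]
    | (m+2) =>
      intro t
      rw [S_rec, R_rec, ih (m+1) (by omega), ih m (by omega)]

theorem stmt7 (n : ℕ) (hn : 0 < n) (t : ℤ) :
    ∑ k ∈ Finset.range (n / 2 + 1),
        (-1 : ℤ) ^ k * (Nat.choose (n - k) k : ℤ) * fibZ ((n : ℤ) - 2 * k + t) =
      if n % 5 = 0 ∨ n % 5 = 3 then (-1) ^ ((n + 1) / 5) * fibZ t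
      else if n % 5 = 1 ∨ n % 5 = 2 then (-1) ^ (n / 5) * fibZ (t + 1)
      else 0 := key n t
end

section
/- For every positive integer n, ∑_{k=0}^{⌊n/2⌋} (-1)^{n-k}·C(n-k, k)·F_{2k} equals (-1)^{⌊(n+1)/5⌋}·F_n if n ≡ 0 or 3 (mod 5); equals (-1)^{⌊(n+1)/5⌋+1}·F_{n-1} if n ≡ 1 or 2 (mod 5); and equals 0 if n ≡ 4 (mod 5). -/
open Finset Real

def Tz (n : ℕ) : ℤ := ∑ k ∈ Finset.range (n+1), (-1:ℤ)^k * (Nat.choose (n-k) k : ℤ) * (Nat.fib (2*k) : ℤ)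
def Uz (n : ℕ) : ℤ := ∑ k ∈ Finset.range (n+1), (-1:ℤ)^k * (Nat.choose (n-k) k : ℤ) * (Nat.fib (2*k+1) : ℤ)

lemma pas (n j : ℕ) (hj : j < n + 2) :
    Nat.choose (n+1-j) (j+1) = Nat.choose (n-j) j + Nat.choose (n-j) (j+1) := by
  rcases le_or_gt j n with h | h
  · have h1 : n + 1 - j = (n - j) + 1 := by omega
    rw [h1, Nat.choose_succ_succ]
  · have h1 : j = n + 1 := by omega
    subst h1
    have h2 : n + 1 - (n+1) = 0 := by omega
    have h3 : n - (n+1) = 0 := by omega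
    rw [h2, h3]
    simp [Nat.choose_zero_succ]

lemma fib2cast (j : ℕ) : (Nat.fib (2*(j+1)) : ℤ) = (Nat.fib (2*j) : ℤ) + (Nat.fib (2*j+1) : ℤ) := by
  have : 2*(j+1) = 2*j + 2 := by ring
  rw [this, Nat.fib_add_two]; push_cast; ring

lemma sum2 (n : ℕ) :
    ∑ j ∈ Finset.range (n+2), (-1:ℤ)^(j+1) * (Nat.choose (n-j) (j+1) : ℤ) * (Nat.fib (2*(j+1)) : ℤ)
      = Tz (n+1) := by
  have h0 : Tz (n+1) = ∑ j ∈ Finset.range (n+1),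
      (-1:ℤ)^(j+1) * (Nat.choose (n+1-(j+1)) (j+1) : ℤ) * (Nat.fib (2*(j+1)) : ℤ)
      + (-1:ℤ)^0 * (Nat.choose (n+1-0) 0 : ℤ) * (Nat.fib (2*0) : ℤ) := by
    rw [Tz, Finset.sum_range_succ']
  rw [Finset.sum_range_succ]
  have hz : (-1:ℤ)^(n+1+1) * (Nat.choose (n-(n+1)) (n+1+1) : ℤ) * (Nat.fib (2*(n+1+1)) : ℤ) = 0 := by
    rw [show n - (n+1) = 0 by omega, Nat.choose_eq_zero_of_lt (by omega)]; simp
  rw [hz, add_zero, h0]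
  simp [Nat.succ_sub_succ]

lemma sum2' (n : ℕ) :
    ∑ j ∈ Finset.range (n+2), (-1:ℤ)^(j+1) * (Nat.choose (n-j) (j+1) : ℤ) * (Nat.fib (2*(j+1)+1) : ℤ)
      = Uz (n+1) - 1 := by
  have h0 : Uz (n+1) = ∑ j ∈ Finset.range (n+1),
      (-1:ℤ)^(j+1) * (Nat.choose (n+1-(j+1)) (j+1) : ℤ) * (Nat.fib (2*(j+1)+1) : ℤ)
      + (-1:ℤ)^0 * (Nat.choose (n+1-0) 0 : ℤ) * (Nat.fib (2*0+1) : ℤ) := by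
    rw [Uz, Finset.sum_range_succ']
  rw [Finset.sum_range_succ]
  have hz : (-1:ℤ)^(n+1+1) * (Nat.choose (n-(n+1)) (n+1+1) : ℤ) * (Nat.fib (2*(n+1+1)+1) : ℤ) = 0 := by
    rw [show n - (n+1) = 0 by omega, Nat.choose_eq_zero_of_lt (by omega)]; simp
  rw [hz, add_zero, h0]
  simp [Nat.succ_sub_succ]

lemma sumT (n : ℕ) :
    ∑ j ∈ Finset.range (n+2), (-1:ℤ)^j * (Nat.choose (n-j) j : ℤ) * (Nat.fib (2*j) : ℤ) = Tz n := by
  rw [Finset.sum_range_succ, Tz, show n - (n+1) = 0 by omega, Nat.choose_eq_zero_of_lt (by omega)]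
  simp

lemma sumU (n : ℕ) :
    ∑ j ∈ Finset.range (n+2), (-1:ℤ)^j * (Nat.choose (n-j) j : ℤ) * (Nat.fib (2*j+1) : ℤ) = Uz n := by
  rw [Finset.sum_range_succ, Uz, show n - (n+1) = 0 by omega, Nat.choose_eq_zero_of_lt (by omega)]
  simp

lemma Tpeel (n : ℕ) : Tz (n+2) = ∑ j ∈ Finset.range (n+2),
    (-1:ℤ)^(j+1) * (Nat.choose (n+1-j) (j+1) : ℤ) * (Nat.fib (2*(j+1)) : ℤ) := by
  rw [Tz, Finset.sum_range_succ']
  simp [Nat.succ_sub_succ]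

lemma Upeel (n : ℕ) : Uz (n+2) = (∑ j ∈ Finset.range (n+2),
    (-1:ℤ)^(j+1) * (Nat.choose (n+1-j) (j+1) : ℤ) * (Nat.fib (2*(j+1)+1) : ℤ)) + 1 := by
  rw [Uz, Finset.sum_range_succ']
  simp [Nat.succ_sub_succ]

lemma Trec (n : ℕ) : Tz (n+2) = Tz (n+1) - Tz n - Uz n := by
  rw [Tpeel]
  have hcong : ∀ j ∈ Finset.range (n+2),
      (-1:ℤ)^(j+1) * (Nat.choose (n+1-j) (j+1) : ℤ) * (Nat.fib (2*(j+1)) : ℤ)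
      = (-1:ℤ)^(j+1) * (Nat.choose (n-j) (j+1) : ℤ) * (Nat.fib (2*(j+1)) : ℤ)
        + (-((-1:ℤ)^j * (Nat.choose (n-j) j : ℤ) * (Nat.fib (2*j) : ℤ))
        + (-((-1:ℤ)^j * (Nat.choose (n-j) j : ℤ) * (Nat.fib (2*j+1) : ℤ)))) := by
    intro j hj
    rw [pas n j (Finset.mem_range.mp hj), fib2cast j]
    push_cast
    ring
  rw [Finset.sum_congr rfl hcong, Finset.sum_add_distrib, Finset.sum_add_distrib,
    sum2 n, Finset.sum_neg_distrib, Finset.sum_neg_distrib, sumT, sumU]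
  ring

lemma fib2cast' (j : ℕ) : (Nat.fib (2*(j+1)+1) : ℤ) = (Nat.fib (2*j) : ℤ) + 2 * (Nat.fib (2*j+1) : ℤ) := by
  have h1 : 2*(j+1)+1 = (2*j+1) + 2 := by ring
  rw [h1, Nat.fib_add_two, show 2*j+1+1 = 2*j+2 by ring, Nat.fib_add_two]; push_cast; ring

lemma Urec (n : ℕ) : Uz (n+2) = Uz (n+1) - Tz n - 2 * Uz n := by
  rw [Upeel]
  have hcong : ∀ j ∈ Finset.range (n+2),
      (-1:ℤ)^(j+1) * (Nat.choose (n+1-j) (j+1) : ℤ) * (Nat.fib (2*(j+1)+1) : ℤ)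
      = (-1:ℤ)^(j+1) * (Nat.choose (n-j) (j+1) : ℤ) * (Nat.fib (2*(j+1)+1) : ℤ)
        + (-((-1:ℤ)^j * (Nat.choose (n-j) j : ℤ) * (Nat.fib (2*j) : ℤ))
        + (-2 * ((-1:ℤ)^j * (Nat.choose (n-j) j : ℤ) * (Nat.fib (2*j+1) : ℤ)))) := by
    intro j hj
    rw [pas n j (Finset.mem_range.mp hj), fib2cast' j]
    push_cast
    ring
  rw [Finset.sum_congr rfl hcong, Finset.sum_add_distrib, Finset.sum_add_distrib, sum2' n,
    Finset.sum_neg_distrib]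
  rw [sumT]
  rw [← Finset.mul_sum, sumU]  -- for the -2 * ... sum? shape: ∑ (-2 * x) = -2 * ∑ x
  ring

def ggA : ℕ → ℤ | 0 => 1 | 1 => -1 | 2 => 1 | 3 => -1 | _ => 0
def ggB : ℕ → ℤ | 0 => 0 | 1 => 1 | 2 => -1 | _ => 0
def hhA : ℕ → ℤ | 1 => 1 | 2 => -1 | _ => 0
def hhB : ℕ → ℤ | 0 => 1 | 3 => -1 | _ => 0

@[simp] lemma ggA0 : ggA 0 = 1 := rfl
@[simp] lemma ggA1 : ggA 1 = -1 := rfl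
@[simp] lemma ggA2 : ggA 2 = 1 := rfl
@[simp] lemma ggA3 : ggA 3 = -1 := rfl
@[simp] lemma ggA4 : ggA 4 = 0 := rfl
@[simp] lemma ggB0 : ggB 0 = 0 := rfl
@[simp] lemma ggB1 : ggB 1 = 1 := rfl
@[simp] lemma ggB2 : ggB 2 = -1 := rfl
@[simp] lemma ggB3 : ggB 3 = 0 := rfl
@[simp] lemma ggB4 : ggB 4 = 0 := rfl
@[simp] lemma hhA0 : hhA 0 = 0 := rfl
@[simp] lemma hhA1 : hhA 1 = 1 := rfl
@[simp] lemma hhA2 : hhA 2 = -1 := rfl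
@[simp] lemma hhA3 : hhA 3 = 0 := rfl
@[simp] lemma hhA4 : hhA 4 = 0 := rfl
@[simp] lemma hhB0 : hhB 0 = 1 := rfl
@[simp] lemma hhB1 : hhB 1 = 0 := rfl
@[simp] lemma hhB2 : hhB 2 = 0 := rfl
@[simp] lemma hhB3 : hhB 3 = -1 := rfl
@[simp] lemma hhB4 : hhB 4 = 0 := rfl

def gg (n : ℕ) : ℤ := ggA (n%5) * (Nat.fib n : ℤ) + ggB (n%5) * (Nat.fib (n+1) : ℤ)
def hh (n : ℕ) : ℤ := hhA (n%5) * (Nat.fib n : ℤ) + hhB (n%5) * (Nat.fib (n+1) : ℤ)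

lemma fibc (n : ℕ) : (Nat.fib (n+2) : ℤ) = (Nat.fib n : ℤ) + (Nat.fib (n+1) : ℤ) := by
  rw [Nat.fib_add_two]; push_cast; ring

lemma ggRec (n : ℕ) : gg (n+2) = gg (n+1) - gg n - hh n := by
  have e1 := fibc n
  have e2 := fibc (n+1)
  have h5 : n % 5 = 0 ∨ n % 5 = 1 ∨ n % 5 = 2 ∨ n % 5 = 3 ∨ n % 5 = 4 := by omega
  rcases h5 with h|h|h|h|h <;>
    rw [gg, gg, gg, hh, show (n+1)%5 = (n%5+1)%5 by omega, show (n+2)%5 = (n%5+2)%5 by omega, h] <;>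
    norm_num <;> rw [show n+1+1 = n+2 by ring] at e2 ⊢ <;> linarith [e1, e2]

lemma hhRec (n : ℕ) : hh (n+2) = hh (n+1) - gg n - 2 * hh n := by
  have e1 := fibc n
  have e2 := fibc (n+1)
  have h5 : n % 5 = 0 ∨ n % 5 = 1 ∨ n % 5 = 2 ∨ n % 5 = 3 ∨ n % 5 = 4 := by omega
  rcases h5 with h|h|h|h|h <;>
    rw [hh, hh, hh, gg, show (n+1)%5 = (n%5+1)%5 by omega, show (n+2)%5 = (n%5+2)%5 by omega, h] <;>
    norm_num <;> rw [show n+1+1 = n+2 by ring] at e2 ⊢ <;> linarith [e1, e2]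

lemma closed (n : ℕ) : (Tz n = gg n ∧ Uz n = hh n) ∧ (Tz (n+1) = gg (n+1) ∧ Uz (n+1) = hh (n+1)) := by
  induction n with
  | zero =>
    refine ⟨⟨?_, ?_⟩, ?_, ?_⟩ <;>
      norm_num [Tz, Uz, gg, hh, ggA, ggB, hhA, hhB, Finset.sum_range_succ]
  | succ n ih =>
    refine ⟨ih.2, ?_, ?_⟩
    · rw [Trec n, ggRec n, ih.1.1, ih.1.2, ih.2.1]
    · rw [Urec n, hhRec n, ih.1.1, ih.1.2, ih.2.2]

lemma npow_eq {a b : ℕ} (h : a % 2 = b % 2) : ((-1:ℤ))^a = (-1)^b := by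
  rw [← Nat.div_add_mod a 2, ← Nat.div_add_mod b 2, pow_add, pow_add, pow_mul, pow_mul]
  norm_num [h]

theorem stmt8' (n : ℕ) (hn : 0 < n) :
    ∑ k ∈ Finset.range (n / 2 + 1),
        (-1 : ℤ) ^ (n - k) * (Nat.choose (n - k) k : ℤ) * (Nat.fib (2 * k) : ℤ) =
      if n % 5 = 0 ∨ n % 5 = 3 then (-1) ^ ((n + 1) / 5) * (Nat.fib n : ℤ)
      else if n % 5 = 1 ∨ n % 5 = 2 then (-1) ^ ((n + 1) / 5 + 1) * (Nat.fib (n - 1) : ℤ)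
      else 0 := by
  have hext : ∑ k ∈ Finset.range (n / 2 + 1),
      (-1 : ℤ) ^ (n - k) * (Nat.choose (n - k) k : ℤ) * (Nat.fib (2 * k) : ℤ)
      = ∑ k ∈ Finset.range (n + 1),
      (-1 : ℤ) ^ (n - k) * (Nat.choose (n - k) k : ℤ) * (Nat.fib (2 * k) : ℤ) := by
    refine Finset.sum_subset (Finset.range_subset_range.mpr (by omega)) ?_
    intro k hk hk'
    rw [Nat.choose_eq_zero_of_lt (by
      simp only [Finset.mem_range] at hk hk'; omega)]
    simp
  have hsign : ∑ k ∈ Finset.range (n + 1),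
      (-1 : ℤ) ^ (n - k) * (Nat.choose (n - k) k : ℤ) * (Nat.fib (2 * k) : ℤ)
      = (-1:ℤ)^n * Tz n := by
    rw [Tz, Finset.mul_sum]
    refine Finset.sum_congr rfl ?_
    intro k hk
    have hkn : k ≤ n := by simp only [Finset.mem_range] at hk; omega
    have h1 : ((-1:ℤ))^(n-k) = (-1)^n * (-1)^k := by
      rw [← pow_add]
      exact npow_eq (by omega)
    rw [h1]; ring
  rw [hext, hsign, (closed n).1.1, gg]
  have h5 : n % 5 = 0 ∨ n % 5 = 1 ∨ n % 5 = 2 ∨ n % 5 = 3 ∨ n % 5 = 4 := by omega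
  rcases h5 with h|h|h|h|h
  · rw [if_pos (Or.inl h), h]
    simp only [ggA, ggB]
    rw [npow_eq (a := n) (b := (n+1)/5) (by omega)]
    ring
  · rw [if_neg (by omega), if_pos (Or.inl h)]
    obtain ⟨m, rfl⟩ : ∃ m, n = m + 1 := ⟨n - 1, by omega⟩
    rw [h]
    simp only [ggA, ggB, Nat.add_sub_cancel]
    rw [npow_eq (a := m+1) (b := (m+1+1)/5 + 1) (by omega), fibc m]
    ring
  · rw [if_neg (by omega), if_pos (Or.inr h)]
    obtain ⟨m, rfl⟩ : ∃ m, n = m + 1 := ⟨n - 1, by omega⟩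
    rw [h]
    simp only [ggA, ggB, Nat.add_sub_cancel]
    rw [npow_eq (a := m+1) (b := (m+1+1)/5) (by omega), pow_succ,
      show m+1+1 = m+2 by ring, fibc m]
    ring
  · rw [if_pos (Or.inr h), h]
    simp only [ggA, ggB]
    rw [npow_eq (a := n) (b := (n+1)/5 + 1) (by omega), pow_succ]
    ring
  · rw [if_neg (by omega), if_neg (by omega), h]
    simp only [ggA, ggB]
    ring


theorem stmt8 (n : ℕ) (hn : 0 < n) :
    ∑ k ∈ Finset.range (n / 2 + 1),
        (-1 : ℤ) ^ (n - k) * (Nat.choose (n - k) k : ℤ) * (Nat.fib (2 * k) : ℤ) =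
      if n % 5 = 0 ∨ n % 5 = 3 then (-1) ^ ((n + 1) / 5) * (Nat.fib n : ℤ)
      else if n % 5 = 1 ∨ n % 5 = 2 then (-1) ^ ((n + 1) / 5 + 1) * (Nat.fib (n - 1) : ℤ)
      else 0 := stmt8' n hn
end
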